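/- For the vector field X associated to u̇ = -v + h, v̇ = u + h, ẇ = -w + h with h(u,v,w) = -(1/2)u² - (1/2)v² + a₃w² - uw + vw, the polynomial F(u,v,w) = w + ((u+w)² + (v-w)²)/2 - (1+a₃)w² satisfies XF = (-1 - 2u + 2a₃w)·F, i.e., F = 0 is an invariant algebraic surface with cofactor K(u,v,w) = -1 - 2u + 2a₃w. -/

import Mathlib

noncomputable def h4 (a₃ u v w : ℝ) : ℝ :=
  -(1/2)*u^2 - (1/2)*v^2 + a₃*w^2 - u*w + v*w

noncomputable def F4 (a₃ u v w : ℝ) : ℝ :=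
  w + ((u + w)^2 + (v - w)^2)/2 - (1 + a₃)*w^2

lemma dF4u (a₃ u v w : ℝ) : deriv (fun s => F4 a₃ s v w) u = u + w := by
  have : (fun s => F4 a₃ s v w) = fun s => w + ((s + w)^2 + (v - w)^2)/2 - (1 + a₃)*w^2 := rfl
  rw [this]
  have h : HasDerivAt (fun s : ℝ => w + ((s + w)^2 + (v - w)^2)/2 - (1 + a₃)*w^2) (u + w) u := by
    have := ((hasDerivAt_id u).add_const w).pow 2
    have h2 := ((this.add_const ((v - w)^2)).div_const 2).const_add w
    have h3 := h2.sub_const ((1 + a₃)*w^2)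
    convert h3 using 1 <;> try rfl
    simp [id_eq]
  exact h.deriv

lemma dF4v (a₃ u v w : ℝ) : deriv (fun s => F4 a₃ u s w) v = v - w := by
  have : (fun s => F4 a₃ u s w) = fun s => w + ((u + w)^2 + (s - w)^2)/2 - (1 + a₃)*w^2 := rfl
  rw [this]
  have h : HasDerivAt (fun s : ℝ => w + ((u + w)^2 + (s - w)^2)/2 - (1 + a₃)*w^2) (v - w) v := by
    have := ((hasDerivAt_id v).sub_const w).pow 2
    have h2 := ((this.const_add ((u + w)^2)).div_const 2).const_add w
    have h3 := h2.sub_const ((1 + a₃)*w^2)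
    convert h3 using 1 <;> try rfl
    simp [id_eq]
  exact h.deriv

lemma dF4w (a₃ u v w : ℝ) :
    deriv (fun s => F4 a₃ u v s) w = 1 + (u + w) - (v - w) - 2*(1 + a₃)*w := by
  have : (fun s => F4 a₃ u v s) = fun s => s + ((u + s)^2 + (v - s)^2)/2 - (1 + a₃)*s^2 := rfl
  rw [this]
  have h : HasDerivAt (fun s : ℝ => s + ((u + s)^2 + (v - s)^2)/2 - (1 + a₃)*s^2)
      (1 + (u + w) - (v - w) - 2*(1 + a₃)*w) w := by
    have h1 : HasDerivAt (fun s : ℝ => u + s) 1 w := (hasDerivAt_id w).const_add u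
    have h2 : HasDerivAt (fun s : ℝ => v - s) (-1) w := (hasDerivAt_id w).const_sub v
    have h1' := h1.pow 2
    have h2' := h2.pow 2
    have h3 := ((h1'.add h2').div_const 2)
    have h4 : HasDerivAt (fun s : ℝ => (1 + a₃)*s^2) ((1 + a₃)*(2*w)) w := by
      have := ((hasDerivAt_id w).pow 2).const_mul (1 + a₃)
      convert this using 1 <;> try rfl
      simp [id_eq]
    have h5 := ((hasDerivAt_id w).add h3).sub h4
    convert h5 using 1 <;> try rfl
    push_cast; simp [id_eq]; try ring
  exact h.deriv

/-- F = 0 is an invariant algebraic surface with cofactor K = -1 - 2u + 2a₃w. -/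
theorem stmt_4 : ∀ a₃ u v w : ℝ,
    (-v + h4 a₃ u v w) * deriv (fun s => F4 a₃ s v w) u
    + (u + h4 a₃ u v w) * deriv (fun s => F4 a₃ u s w) v
    + (-w + h4 a₃ u v w) * deriv (fun s => F4 a₃ u v s) w
    = (-1 - 2*u + 2*a₃*w) * F4 a₃ u v w := by
  intro a₃ u v w
  rw [dF4u, dF4v, dF4w, h4, F4]
  ring
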